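/- Suppose uₙ is a complex sequence such that uₙ = c₊n^{-α/4}e^{iφ(n)} + c₋n^{-α/4}e^{-iφ(n)} + o(n^{-α/4}) with (c₊, c₋) ≠ (0,0) and φ(n) = (√(-bE)/2^{α/2})·n^{1-α/2}/(1-α/2), where 0 < α ≤ 1, b > 0, E < 0. Then there exist positive constants C₁, C₂ with C₁N^{1-α/2} ≤ ∑_{n=1}^N |uₙ|² ≤ C₂N^{1-α/2} for all large N. -/

import Mathlib

open Filter Asymptotics

lemma rpow_slope_bounds {s x : ℝ} (hs0 : 0 ≤ s) (hs1 : s < 1) (hx : 1 ≤ x) :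
    (1-s) * (x+1)^(-s) ≤ (x+1)^(1-s) - x^(1-s) ∧
      (x+1)^(1-s) - x^(1-s) ≤ (1-s) * x^(-s) := by
  have hx0 : (0:ℝ) < x := lt_of_lt_of_le one_pos hx
  obtain ⟨ξ, hξ, hslope⟩ := exists_hasDerivAt_eq_slope (fun y => y^(1-s))
    (fun y => (1-s) * y^(-s)) (by linarith : x < x+1)
    (by
      apply ContinuousOn.rpow_const continuousOn_id
      intro y _
      exact Or.inr (by linarith))
    (by
      intro y hy
      have hy0 : y ≠ 0 := by
        rcases hy with ⟨h1, h2⟩; exact ne_of_gt (by linarith)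
      have := Real.hasDerivAt_rpow_const (x := y) (p := 1-s) (Or.inl hy0)
      simpa [show (1:ℝ)-s-1 = -s by ring] using this)
  have hslope' : (1-s) * ξ^(-s) = (x+1)^(1-s) - x^(1-s) := by
    rw [hslope]; field_simp; ring
  rcases hξ with ⟨hξ1, hξ2⟩
  have hξ0 : (0:ℝ) < ξ := lt_trans hx0 hξ1
  have hmono1 : (x+1)^(-s) ≤ ξ^(-s) :=
    Real.rpow_le_rpow_of_nonpos hξ0 (le_of_lt hξ2) (by linarith)
  have hmono2 : ξ^(-s) ≤ x^(-s) :=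
    Real.rpow_le_rpow_of_nonpos hx0 (le_of_lt hξ1) (by linarith)
  have h1s : (0:ℝ) < 1 - s := by linarith
  constructor
  · rw [← hslope']; nlinarith
  · rw [← hslope']; nlinarith

lemma sum_rpow_le {s : ℝ} (hs0 : 0 ≤ s) (hs1 : s < 1) (N : ℕ) :
    ∑ n ∈ Finset.Icc 1 N, (n:ℝ)^(-s) ≤ (N:ℝ)^(1-s) / (1-s) := by
  have h1s : (0:ℝ) < 1 - s := by linarith
  induction N with
  | zero => simp [Real.zero_rpow (by linarith : (1:ℝ)-s ≠ 0)]
  | succ N ih =>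
    rw [Finset.sum_Icc_succ_top (by omega)]
    push_cast
    rcases Nat.eq_zero_or_pos N with h | h
    · subst h
      rw [show Finset.Icc 1 0 = (∅ : Finset ℕ) from rfl, Finset.sum_empty]
      norm_num [Real.one_rpow]
      exact one_le_inv_iff₀.mpr ⟨h1s, by linarith⟩
    · have hx : (1:ℝ) ≤ (N:ℝ) := by exact_mod_cast h
      have h2 := (rpow_slope_bounds hs0 hs1 hx).1
      have h3 : ((N:ℝ)+1)^(-s) ≤ (((N:ℝ)+1)^(1-s) - (N:ℝ)^(1-s))/(1-s) := by
        rw [le_div_iff₀ h1s]; nlinarith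
      rw [sub_div] at h3
      have := ih
      linarith [h3, ih]

lemma sum_rpow_ge {s : ℝ} (hs0 : 0 ≤ s) (hs1 : s < 1) (N : ℕ) :
    ((N:ℝ)^(1-s) - 1) / (1-s) ≤ ∑ n ∈ Finset.Icc 1 N, (n:ℝ)^(-s) := by
  have h1s : (0:ℝ) < 1 - s := by linarith
  have key : ∀ N : ℕ, (((N:ℝ)+1)^(1-s) - 1) / (1-s) ≤ ∑ n ∈ Finset.Icc 1 N, (n:ℝ)^(-s) := by
    intro N
    induction N with
    | zero => simp [Real.one_rpow]
    | succ N ih =>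
      rw [Finset.sum_Icc_succ_top (by omega)]
      push_cast
      have hx : (1:ℝ) ≤ (N:ℝ)+1 := by
        have := Nat.cast_nonneg (α := ℝ) N; linarith
      have h2 := (rpow_slope_bounds hs0 hs1 hx).2
      have h3 : (((N:ℝ)+1+1)^(1-s) - ((N:ℝ)+1)^(1-s))/(1-s) ≤ ((N:ℝ)+1)^(-s) := by
        rw [div_le_iff₀ h1s]; nlinarith
      rw [sub_div] at h3
      push_cast at ih
      rw [sub_div] at ih ⊢
      linarith [h3, ih]
  refine le_trans ?_ (key N)
  have hmono : (N:ℝ)^(1-s) ≤ ((N:ℝ)+1)^(1-s) :=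
    Real.rpow_le_rpow (Nat.cast_nonneg N) (by linarith) (le_of_lt h1s)
  gcongr

lemma osc_sum_bound {s K : ℝ} (hs0 : 0 < s) (hs2 : s ≤ 1/2) (hK : 0 < K) (N : ℕ) :
    ‖∑ n ∈ Finset.Icc 1 N, (((n:ℝ)^(-s) : ℝ) : ℂ) *
        Complex.exp (2 * Complex.I * (((K/(1-s)) * (n:ℝ)^(1-s) : ℝ) : ℂ))‖
      ≤ 1/K + (s + 2*K) * ∑ n ∈ Finset.Icc 1 N, (n:ℝ)^(-(2*s)) := by
  have hb : (0:ℝ) < 1 - s := by linarith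
  set ψ : ℝ → ℝ := fun x => (K/(1-s)) * x^(1-s) with hψdef
  set g : ℝ → ℂ := fun x => ((x^(-s) : ℝ) : ℂ) * Complex.exp (2*Complex.I*((ψ x : ℝ) : ℂ))
    with hgdef
  set G : ℝ → ℂ := fun x => Complex.exp (2*Complex.I*((ψ x : ℝ) : ℂ)) / (2*Complex.I*(K:ℂ))
    with hGdef
  have hIK : (2:ℂ)*Complex.I*(K:ℂ) ≠ 0 := by
    simp [Complex.I_ne_zero, Complex.ofReal_ne_zero, ne_of_gt hK]
  -- norm of the exponential is 1
  have hnorm : ∀ t : ℝ, ‖Complex.exp (2*Complex.I*(t:ℂ))‖ = 1 := by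
    intro t
    rw [show 2*Complex.I*(t:ℂ) = ((2*t:ℝ):ℂ)*Complex.I by
      push_cast; ring, Complex.norm_exp_ofReal_mul_I]
  -- derivative of ψ
  have hψ : ∀ x : ℝ, 0 < x → HasDerivAt ψ (K * x^(-s)) x := by
    intro x hx
    have h := (Real.hasDerivAt_rpow_const (x := x) (p := 1-s)
      (Or.inl (ne_of_gt hx))).const_mul (K/(1-s))
    refine h.congr_deriv ?_
    rw [show (1:ℝ)-s-1 = -s by ring]
    field_simp
  -- derivative of the exponential factor
  have hexp : ∀ x : ℝ, 0 < x → HasDerivAt (fun x => Complex.exp (2*Complex.I*((ψ x : ℝ):ℂ)))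
      (Complex.exp (2*Complex.I*((ψ x : ℝ):ℂ)) * (2*Complex.I*((K * x^(-s) : ℝ):ℂ))) x := by
    intro x hx
    exact (((hψ x hx).ofReal_comp).const_mul (2*Complex.I)).cexp
  -- derivative of G is g
  have hG : ∀ x : ℝ, 0 < x → HasDerivAt G (g x) x := by
    intro x hx
    have h := (hexp x hx).div_const (2*Complex.I*(K:ℂ))
    refine h.congr_deriv ?_
    rw [hgdef]
    field_simp
    push_cast
    ring
    rw [mul_comm, ← mul_assoc, inv_mul_cancel₀ (Complex.ofReal_ne_zero.mpr hK.ne'), one_mul]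
  -- derivative of g
  have hg' : ∀ x : ℝ, 0 < x → HasDerivAt g
      ((((-s) * x^(-s-1) : ℝ):ℂ) * Complex.exp (2*Complex.I*((ψ x : ℝ):ℂ))
        + ((x^(-s):ℝ):ℂ) * (Complex.exp (2*Complex.I*((ψ x : ℝ):ℂ))
            * (2*Complex.I*((K * x^(-s) : ℝ):ℂ)))) x := by
    intro x hx
    exact ((Real.hasDerivAt_rpow_const (x := x) (p := -s)
      (Or.inl (ne_of_gt hx))).ofReal_comp).mul (hexp x hx)
  -- bound on the derivative of g
  have hgd_bound : ∀ x : ℝ, 1 ≤ x →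
      ‖(((-s) * x^(-s-1) : ℝ):ℂ) * Complex.exp (2*Complex.I*((ψ x : ℝ):ℂ))
        + ((x^(-s):ℝ):ℂ) * (Complex.exp (2*Complex.I*((ψ x : ℝ):ℂ))
            * (2*Complex.I*((K * x^(-s) : ℝ):ℂ)))‖ ≤ (s + 2*K) * x^(-(2*s)) := by
    intro x hx
    have hx0 : (0:ℝ) < x := lt_of_lt_of_le one_pos hx
    have h1 : ‖(((-s) * x^(-s-1) : ℝ):ℂ)‖ = s * x^(-s-1) := by
      rw [Complex.norm_real, Real.norm_eq_abs, abs_mul, abs_neg, abs_of_nonneg hs0.le,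
        abs_of_nonneg (Real.rpow_nonneg hx0.le _)]
    have h2 : ‖2*Complex.I*((K * x^(-s) : ℝ):ℂ)‖ = 2 * (K * x^(-s)) := by
      rw [norm_mul, norm_mul, Complex.norm_real, Complex.norm_I, Real.norm_eq_abs,
        abs_of_nonneg (by positivity)]
      simp
    calc ‖_ + _‖ ≤ s * x^(-s-1) * 1 + x^(-s) * (1 * (2 * (K * x^(-s)))) := by
          refine le_trans (norm_add_le _ _) ?_
          rw [norm_mul, norm_mul, norm_mul, h1, h2, hnorm,
            Complex.norm_real, Real.norm_eq_abs, abs_of_nonneg (Real.rpow_nonneg hx0.le _)]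
      _ = s * x^(-s-1) + 2*K * (x^(-s) * x^(-s)) := by ring
      _ ≤ s * x^(-(2*s)) + 2*K * x^(-(2*s)) := by
          have e1 : x^(-s-1) ≤ x^(-(2*s)) :=
            Real.rpow_le_rpow_of_exponent_le hx (by linarith)
          have e2 : x^(-s) * x^(-s) = x^(-(2*s)) := by
            rw [← Real.rpow_add hx0]; ring_nf
          rw [e2]
          nlinarith
      _ = (s + 2*K) * x^(-(2*s)) := by ring
  -- continuity of g on [1, ∞)
  have hgc : ContinuousOn g (Set.Ici (1:ℝ)) := by
    intro x hx
    exact ((hg' x (lt_of_lt_of_le one_pos hx)).continuousAt).continuousWithinAt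
  -- integrability
  have hint : ∀ a b : ℝ, 1 ≤ a → a ≤ b → IntervalIntegrable g MeasureTheory.volume a b := by
    intro a b ha hab
    refine (hgc.mono ?_).intervalIntegrable
    rw [Set.uIcc_of_le hab]
    intro y hy
    exact le_trans ha hy.1
  -- FTC
  have hFTC : ∫ x in (1:ℝ)..((N:ℝ)+1), g x = G ((N:ℝ)+1) - G 1 := by
    refine intervalIntegral.integral_eq_sub_of_hasDerivAt ?_
      (hint 1 ((N:ℝ)+1) le_rfl (by have := Nat.cast_nonneg (α := ℝ) N; linarith))
    intro x hx
    rw [Set.uIcc_of_le (by have := Nat.cast_nonneg (α := ℝ) N; linarith : (1:ℝ) ≤ (N:ℝ)+1)] at hx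
    exact hG x (lt_of_lt_of_le one_pos hx.1)
  -- split integral into unit intervals
  have hsplit : ∑ i ∈ Finset.range N, ∫ x in ((i:ℝ)+1)..((i:ℝ)+1+1), g x
      = ∫ x in (1:ℝ)..((N:ℝ)+1), g x := by
    have := intervalIntegral.sum_integral_adjacent_intervals
      (f := g) (μ := MeasureTheory.volume) (a := fun i : ℕ => (i:ℝ)+1) (n := N) ?_
    · convert this using 2 <;> push_cast <;> ring_nf
    · intro k _
      refine hint _ _ ?_ ?_
      · show (1:ℝ) ≤ (k:ℝ)+1
        have := Nat.cast_nonneg (α := ℝ) k; linarith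
      · show ((k:ℝ)+1) ≤ ((k+1:ℕ):ℝ)+1
        push_cast; linarith
  -- per-interval comparison
  have hkey : ∀ n : ℕ, 1 ≤ n →
      ‖g n - ∫ x in ((n:ℝ))..((n:ℝ)+1), g x‖ ≤ (s+2*K) * (n:ℝ)^(-(2*s)) := by
    intro n hn
    have hn1 : (1:ℝ) ≤ (n:ℝ) := by exact_mod_cast hn
    have hn0 : (0:ℝ) < (n:ℝ) := by linarith
    have hsub : ‖g n - ∫ x in ((n:ℝ))..((n:ℝ)+1), g x‖
        = ‖∫ x in ((n:ℝ))..((n:ℝ)+1), (g n - g x)‖ := by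
      rw [intervalIntegral.integral_sub intervalIntegrable_const
        (hint _ _ hn1 (by linarith)), intervalIntegral.integral_const]
      norm_num
    rw [hsub]
    have hb : ∀ x ∈ Set.uIoc ((n:ℝ)) ((n:ℝ)+1), ‖g n - g x‖ ≤ (s+2*K) * (n:ℝ)^(-(2*s)) := by
      intro x hx
      rw [Set.uIoc_of_le (by linarith)] at hx
      have hcvx : Convex ℝ (Set.Icc (n:ℝ) ((n:ℝ)+1)) := convex_Icc _ _
      have hmem : x ∈ Set.Icc (n:ℝ) ((n:ℝ)+1) := ⟨hx.1.le, hx.2⟩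
      have hnmem : (n:ℝ) ∈ Set.Icc (n:ℝ) ((n:ℝ)+1) := ⟨le_rfl, by linarith⟩
      have := hcvx.norm_image_sub_le_of_norm_hasDerivWithin_le
        (f := g) (C := (s+2*K) * (n:ℝ)^(-(2*s)))
        (fun y hy => (hg' y (by rcases hy with ⟨h1,_⟩; linarith)).hasDerivWithinAt)
        (fun y hy => by
          rcases hy with ⟨h1, h2⟩
          refine le_trans (hgd_bound y (le_trans hn1 h1)) ?_
          have : y^(-(2*s)) ≤ (n:ℝ)^(-(2*s)) :=
            Real.rpow_le_rpow_of_nonpos hn0 h1 (by linarith)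
          have hsk : (0:ℝ) ≤ s + 2*K := by linarith
          nlinarith)
        hnmem hmem
      have h2 : ‖g ↑n - g x‖ ≤ ((s+2*K) * (n:ℝ)^(-(2*s))) * ‖x - (n:ℝ)‖ := by
        rw [norm_sub_rev]; exact this
      refine le_trans h2 ?_
      have : ‖x - (n:ℝ)‖ ≤ 1 := by
        rw [Real.norm_eq_abs, abs_of_nonneg (by linarith [hx.1.le])]
        linarith [hx.2]
      have hC : (0:ℝ) ≤ (s+2*K) * (n:ℝ)^(-(2*s)) := by positivity
      nlinarith
    have := intervalIntegral.norm_integral_le_of_norm_le_const hb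
    simpa using this
  -- reindex the sum
  have hre : ∑ n ∈ Finset.Icc 1 N, g n = ∑ i ∈ Finset.range N, g ((i:ℝ)+1) := by
    rw [← Finset.Ico_add_one_right_eq_Icc, Finset.sum_Ico_eq_sum_range]
    apply Finset.sum_congr rfl
    intro i _
    congr 1
    push_cast
    ring
  have hre2 : ∑ n ∈ Finset.Icc 1 N, (n:ℝ)^(-(2*s))
      = ∑ i ∈ Finset.range N, ((i:ℝ)+1)^(-(2*s)) := by
    rw [← Finset.Ico_add_one_right_eq_Icc, Finset.sum_Ico_eq_sum_range]
    apply Finset.sum_congr rfl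
    intro i _
    congr 1
    push_cast
    ring
  -- assemble
  have hGnorm : ∀ x : ℝ, ‖G x‖ = 1/(2*K) := by
    intro x
    rw [hGdef]
    simp only []
    rw [norm_div, hnorm]
    rw [norm_mul, norm_mul, Complex.norm_I, Complex.norm_real, Real.norm_eq_abs,
      abs_of_nonneg hK.le]
    norm_num
  have main : ‖∑ n ∈ Finset.Icc 1 N, g n - (G ((N:ℝ)+1) - G 1)‖
      ≤ (s + 2*K) * ∑ n ∈ Finset.Icc 1 N, (n:ℝ)^(-(2*s)) := by
    rw [hre, ← hFTC, ← hsplit, ← Finset.sum_sub_distrib, hre2, Finset.mul_sum]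
    refine le_trans (norm_sum_le _ _) (Finset.sum_le_sum ?_)
    intro i _
    have := hkey (i+1) (by omega)
    push_cast at this ⊢
    convert this using 3 <;> push_cast <;> ring_nf
  have hfinal : ‖∑ n ∈ Finset.Icc 1 N, g n‖
      ≤ 1/K + (s + 2*K) * ∑ n ∈ Finset.Icc 1 N, (n:ℝ)^(-(2*s)) := by
    have t1 : ‖∑ n ∈ Finset.Icc 1 N, g n‖
        ≤ ‖∑ n ∈ Finset.Icc 1 N, g n - (G ((N:ℝ)+1) - G 1)‖ + ‖G ((N:ℝ)+1) - G 1‖ := by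
      have := norm_sub_le (∑ n ∈ Finset.Icc 1 N, g n - (G ((N:ℝ)+1) - G 1)) (-(G ((N:ℝ)+1) - G 1))
      simpa using norm_add_le (∑ n ∈ Finset.Icc 1 N, g n - (G ((N:ℝ)+1) - G 1)) (G ((N:ℝ)+1) - G 1)
    have t2 : ‖G ((N:ℝ)+1) - G 1‖ ≤ 1/K := by
      have hns := norm_sub_le (G ((N:ℝ)+1)) (G 1)
      rw [hGnorm, hGnorm] at hns
      have he : 1/(2*K)+1/(2*K) = 1/K := by
        field_simp
        norm_num
      linarith
    linarith [main, t1, t2]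
  exact hfinal

lemma norm_cexp_two_I_mul (t : ℝ) : ‖Complex.exp (2*Complex.I*(t:ℂ))‖ = 1 := by
  rw [show 2*Complex.I*(t:ℂ) = ((2*t:ℝ):ℂ)*Complex.I by push_cast; ring,
    Complex.norm_exp_ofReal_mul_I]

lemma normsq_helper (cp cm : ℂ) (t : ℝ) :
    ‖cp * Complex.exp (Complex.I * (t:ℂ)) + cm * Complex.exp (-Complex.I * (t:ℂ))‖^2
      = Complex.normSq cp + Complex.normSq cm
        + 2 * ((cp * (starRingEnd ℂ) cm) * Complex.exp (2*Complex.I*(t:ℂ))).re := by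
  have habs : ∀ r : ℝ, ‖Complex.exp ((r:ℂ) * Complex.I)‖ = 1 :=
    fun r => Complex.norm_exp_ofReal_mul_I r
  have h1 : Complex.normSq (Complex.exp (Complex.I * (t:ℂ))) = 1 := by
    rw [Complex.normSq_eq_norm_sq, show Complex.I * (t:ℂ) = (t:ℂ) * Complex.I by ring, habs]
    norm_num
  have h2 : Complex.normSq (Complex.exp (-Complex.I * (t:ℂ))) = 1 := by
    rw [Complex.normSq_eq_norm_sq,
      show -Complex.I * (t:ℂ) = ((-t:ℝ):ℂ) * Complex.I by push_cast; ring, habs]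
    norm_num
  have hconj : (starRingEnd ℂ) (Complex.exp (-Complex.I * (t:ℂ)))
      = Complex.exp (Complex.I * (t:ℂ)) := by
    rw [← Complex.exp_conj]
    congr 1
    simp [map_mul, Complex.conj_I, Complex.conj_ofReal]
  have hmul : Complex.exp (Complex.I * (t:ℂ)) * Complex.exp (Complex.I * (t:ℂ))
      = Complex.exp (2*Complex.I*(t:ℂ)) := by
    rw [← Complex.exp_add]; ring_nf
  rw [Complex.sq_norm, Complex.normSq_add, Complex.normSq_mul,
    Complex.normSq_mul, h1, h2, map_mul, hconj]
  have hre : cp * Complex.exp (Complex.I * (t:ℂ))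
        * ((starRingEnd ℂ) cm * Complex.exp (Complex.I * (t:ℂ)))
      = cp * (starRingEnd ℂ) cm * Complex.exp (2*Complex.I*(t:ℂ)) := by
    rw [← hmul]; ring
  rw [hre]
  ring

set_option maxHeartbeats 2000000 in
/-- if `uₙ = c₊ n^{-α/4} e^{iφ(n)} + c₋ n^{-α/4} e^{-iφ(n)} + o(n^{-α/4})`
with `(c₊, c₋) ≠ (0,0)` and `φ(n) = (√(-bE)/2^{α/2}) n^{1-α/2}/(1-α/2)`, then the
partial ℓ²-sums of `u` grow exactly like `N^{1-α/2}`. -/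
theorem stmt8 (α b E : ℝ) (h0 : 0 < α) (h1 : α ≤ 1) (hb : 0 < b) (hE : E < 0)
    (cp cm : ℂ) (hc : ¬(cp = 0 ∧ cm = 0))
    (φ : ℕ → ℝ)
    (hφ : ∀ n : ℕ, φ n = (Real.sqrt (-(b * E)) / (2 : ℝ) ^ (α / 2))
        * ((n : ℝ) ^ (1 - α / 2) / (1 - α / 2)))
    (u : ℕ → ℂ)
    (hu : (fun n : ℕ => u n
        - cp * (((n : ℝ) ^ (-(α / 4)) : ℝ) : ℂ) * Complex.exp (Complex.I * (φ n : ℝ))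
        - cm * (((n : ℝ) ^ (-(α / 4)) : ℝ) : ℂ) * Complex.exp (-Complex.I * (φ n : ℝ)))
      =o[atTop] fun n : ℕ => (n : ℝ) ^ (-(α / 4))) :
    ∃ C₁ C₂ : ℝ, 0 < C₁ ∧ 0 < C₂ ∧ ∃ N₀ : ℕ, ∀ N : ℕ, N₀ ≤ N →
      C₁ * (N : ℝ) ^ (1 - α / 2) ≤ (∑ n ∈ Finset.Icc 1 N, ‖u n‖ ^ 2) ∧
      (∑ n ∈ Finset.Icc 1 N, ‖u n‖ ^ 2) ≤ C₂ * (N : ℝ) ^ (1 - α / 2) := by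
  -- basic quantities
  set K : ℝ := Real.sqrt (-(b * E)) / (2 : ℝ) ^ (α / 2) with hKdef
  have hbE : (0:ℝ) < -(b * E) := by nlinarith
  have hK : 0 < K := by
    apply div_pos (Real.sqrt_pos.mpr hbE)
    positivity
  have hβ : (0:ℝ) < 1 - α/2 := by linarith
  set β : ℝ := 1 - α/2 with hβdef
  set S : ℝ := Complex.normSq cp + Complex.normSq cm with hSdef
  have hS : 0 < S := by
    rcases not_and_or.mp hc with h | h
    · have := Complex.normSq_pos.mpr h
      have := Complex.normSq_nonneg cm
      rw [hSdef]; linarith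
    · have := Complex.normSq_pos.mpr h
      have := Complex.normSq_nonneg cp
      rw [hSdef]; linarith
  set w : ℂ := cp * (starRingEnd ℂ) cm with hwdef
  set v : ℕ → ℂ := fun n =>
      cp * (((n : ℝ) ^ (-(α / 4)) : ℝ) : ℂ) * Complex.exp (Complex.I * (φ n : ℝ))
      + cm * (((n : ℝ) ^ (-(α / 4)) : ℝ) : ℂ) * Complex.exp (-Complex.I * (φ n : ℝ)) with hvdef
  have hu' : (fun n : ℕ => u n - v n) =o[atTop] fun n : ℕ => (n : ℝ) ^ (-(α / 4)) := by
    have : (fun n : ℕ => u n - v n) = (fun n : ℕ => u n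
        - cp * (((n : ℝ) ^ (-(α / 4)) : ℝ) : ℂ) * Complex.exp (Complex.I * (φ n : ℝ))
        - cm * (((n : ℝ) ^ (-(α / 4)) : ℝ) : ℂ) * Complex.exp (-Complex.I * (φ n : ℝ))) := by
      funext n; rw [hvdef]; ring
    rw [this]; exact hu
  -- pointwise norm of the main term
  have hVnorm : ∀ n : ℕ, 1 ≤ n → ‖v n‖^2
      = S * (n:ℝ)^(-(α/2))
        + 2 * (w * Complex.exp (2*Complex.I*((φ n : ℝ):ℂ))).re * (n:ℝ)^(-(α/2)) := by
    intro n hn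
    have hn0 : (0:ℝ) < (n:ℝ) := by exact_mod_cast Nat.lt_of_lt_of_le Nat.zero_lt_one hn
    have hr : (0:ℝ) ≤ (n:ℝ)^(-(α/4)) := Real.rpow_nonneg hn0.le _
    have hfac : v n = (((n:ℝ)^(-(α/4)):ℝ):ℂ)
        * (cp * Complex.exp (Complex.I * ((φ n:ℝ):ℂ))
          + cm * Complex.exp (-Complex.I * ((φ n:ℝ):ℂ))) := by
      rw [hvdef]; ring
    have hr2 : ((n:ℝ)^(-(α/4)))^2 = (n:ℝ)^(-(α/2)) := by
      rw [sq, ← Real.rpow_add hn0, show -(α/4) + -(α/4) = -(α/2) by ring]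
    rw [hfac, norm_mul, mul_pow, Complex.norm_real, Real.norm_eq_abs, abs_of_nonneg hr,
      normsq_helper, hr2, hwdef]
    ring
  -- the sums
  set A : ℕ → ℝ := fun N => ∑ n ∈ Finset.Icc 1 N, (n:ℝ)^(-(α/2)) with hAdef
  set Efn : ℕ → ℂ := fun N => ∑ n ∈ Finset.Icc 1 N,
      (((n:ℝ)^(-(α/2)) : ℝ):ℂ) * Complex.exp (2*Complex.I*((φ n : ℝ):ℂ)) with hEdef
  have hVsum : ∀ N : ℕ, ∑ n ∈ Finset.Icc 1 N, ‖v n‖^2 = S * A N + 2 * (w * Efn N).re := by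
    intro N
    have hpt : ∀ n ∈ Finset.Icc 1 N, ‖v n‖^2
        = S * (n:ℝ)^(-(α/2)) + 2 * (w * ((((n:ℝ)^(-(α/2)):ℝ):ℂ)
            * Complex.exp (2*Complex.I*((φ n:ℝ):ℂ)))).re := by
      intro n hn
      rw [hVnorm n (Finset.mem_Icc.mp hn).1,
        show w * ((((n:ℝ)^(-(α/2)):ℝ):ℂ) * Complex.exp (2*Complex.I*((φ n:ℝ):ℂ)))
          = (((n:ℝ)^(-(α/2)):ℝ):ℂ) * (w * Complex.exp (2*Complex.I*((φ n:ℝ):ℂ))) by ring,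
        Complex.re_ofReal_mul]
      ring
    rw [Finset.sum_congr rfl hpt, Finset.sum_add_distrib, hAdef, hEdef, Finset.mul_sum,
      Finset.mul_sum, Complex.re_sum, Finset.mul_sum]
  -- bound on the oscillatory sum
  have hEbound : ∀ N : ℕ, ‖Efn N‖ ≤ 1/K + ((α/2 + 2*K)/(1-3*α/4)) * (N:ℝ)^(1-3*α/4) := by
    intro N
    have h34 : (0:ℝ) < 1 - 3*α/4 := by linarith
    have hosc := osc_sum_bound (s := α/2) (K := K) (by linarith) (by linarith) hK N
    have hEeq : Efn N = ∑ n ∈ Finset.Icc 1 N, (((n:ℝ)^(-(α/2)) : ℝ):ℂ) *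
        Complex.exp (2 * Complex.I * (((K/(1-α/2)) * (n:ℝ)^(1-α/2) : ℝ) : ℂ)) := by
      rw [hEdef]
      refine Finset.sum_congr rfl fun n _ => ?_
      have heq : K * ((n:ℝ)^β / β) = K/(1-α/2) * (n:ℝ)^(1-α/2) := by
        rw [hβdef]; ring
      rw [hφ n, heq]
    have hsum1 : ∑ n ∈ Finset.Icc 1 N, (n:ℝ)^(-(2*(α/2)))
        ≤ ∑ n ∈ Finset.Icc 1 N, (n:ℝ)^(-(3*α/4)) := by
      refine Finset.sum_le_sum fun n hn => ?_
      have hn1 : (1:ℝ) ≤ (n:ℝ) := by exact_mod_cast (Finset.mem_Icc.mp hn).1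
      exact Real.rpow_le_rpow_of_exponent_le hn1 (by linarith)
    have hsum2 := sum_rpow_le (s := 3*α/4) (by linarith) (by linarith) N
    have hfin : (α/2 + 2*K) * ∑ n ∈ Finset.Icc 1 N, (n:ℝ)^(-(2*(α/2)))
        ≤ ((α/2 + 2*K)/(1-3*α/4)) * (N:ℝ)^(1-3*α/4) := by
      have hsk : (0:ℝ) ≤ α/2 + 2*K := by linarith
      have := mul_le_mul_of_nonneg_left (le_trans hsum1 hsum2) hsk
      calc (α/2 + 2*K) * ∑ n ∈ Finset.Icc 1 N, (n:ℝ)^(-(2*(α/2)))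
          ≤ (α/2 + 2*K) * ((N:ℝ)^(1-3*α/4)/(1-3*α/4)) := this
        _ = ((α/2 + 2*K)/(1-3*α/4)) * (N:ℝ)^(1-3*α/4) := by ring
    rw [hEeq]
    exact le_trans hosc (by linarith)
  -- A bounds
  have hAub : ∀ N : ℕ, A N ≤ (N:ℝ)^β / β := fun N => sum_rpow_le (by linarith) (by linarith) N
  have hAlb : ∀ N : ℕ, ((N:ℝ)^β - 1)/β ≤ A N := fun N => sum_rpow_ge (by linarith) (by linarith) N
  set γ : ℝ := 1-3*α/4 with hγdef
  set D : ℝ := (α/2 + 2*K)/γ with hDdef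
  have hγ0 : (0:ℝ) < γ := by rw [hγdef]; linarith
  have hγβ : 0 < β - γ := by rw [hβdef, hγdef]; linarith
  have hD0 : (0:ℝ) ≤ D := by
    rw [hDdef]; apply div_nonneg (by linarith) hγ0.le
  -- little-o data
  set ε₂ : ℝ := Real.sqrt (S/16) with hε₂def
  have hε₂ : 0 < ε₂ := Real.sqrt_pos.mpr (by positivity)
  have hε₂sq : ε₂^2 = S/16 := Real.sq_sqrt (by positivity)
  obtain ⟨N₁, hN₁⟩ := eventually_atTop.mp (isLittleO_iff.mp hu' hε₂)
  set B : ℝ := ∑ n ∈ Finset.range N₁, ‖u n - v n‖^2 with hBdef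
  have hB0 : 0 ≤ B := Finset.sum_nonneg fun n _ => sq_nonneg _
  -- bound on the sum of squared errors
  have hdiff : ∀ N : ℕ, ∑ n ∈ Finset.Icc 1 N, ‖u n - v n‖^2 ≤ B + (S/16) * A N := by
    intro N
    have hpt : ∀ n ∈ Finset.Icc 1 N, ‖u n - v n‖^2
        ≤ (if n < N₁ then ‖u n - v n‖^2 else 0) + (S/16) * (n:ℝ)^(-(α/2)) := by
      intro n hn
      rcases Finset.mem_Icc.mp hn with ⟨hn1, _⟩
      have hnr : (0:ℝ) < (n:ℝ) := by exact_mod_cast hn1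
      by_cases hcase : n < N₁
      · rw [if_pos hcase]
        have : (0:ℝ) ≤ (S/16) * (n:ℝ)^(-(α/2)) := by positivity
        linarith
      · rw [if_neg hcase, zero_add]
        push_neg at hcase
        have hb2 := hN₁ n hcase
        rw [Real.norm_eq_abs, abs_of_nonneg (Real.rpow_nonneg hnr.le _)] at hb2
        have hr2 : ((n:ℝ)^(-(α/4)))^2 = (n:ℝ)^(-(α/2)) := by
          rw [sq, ← Real.rpow_add hnr, show -(α/4) + -(α/4) = -(α/2) by ring]
        have h0 : (0:ℝ) ≤ ‖u n - v n‖ := norm_nonneg _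
        have hrpos : (0:ℝ) ≤ (n:ℝ)^(-(α/4)) := Real.rpow_nonneg hnr.le _
        calc ‖u n - v n‖^2 ≤ (ε₂ * (n:ℝ)^(-(α/4)))^2 := by nlinarith
          _ = ε₂^2 * ((n:ℝ)^(-(α/4)))^2 := by ring
          _ = (S/16) * (n:ℝ)^(-(α/2)) := by rw [hε₂sq, hr2]
    have hsum := Finset.sum_le_sum hpt
    rw [Finset.sum_add_distrib, ← Finset.mul_sum] at hsum
    have hfil : ∑ n ∈ Finset.Icc 1 N, (if n < N₁ then ‖u n - v n‖^2 else 0) ≤ B := by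
      rw [← Finset.sum_filter]
      refine Finset.sum_le_sum_of_subset_of_nonneg ?_ (fun i _ _ => sq_nonneg _)
      intro x hx
      exact Finset.mem_range.mpr (Finset.mem_filter.mp hx).2
    have hAeq : ∑ n ∈ Finset.Icc 1 N, (n:ℝ)^(-(α/2)) = A N := by rw [hAdef]
    linarith [hsum, hfil, hAeq ▸ hsum]
  -- norms of the coefficients
  have hwnorm : ‖w‖ = ‖cp‖ * ‖cm‖ := by
    rw [hwdef, norm_mul, RCLike.norm_conj]
  have hwre : ∀ n : ℕ, |(w * Complex.exp (2*Complex.I*((φ n:ℝ):ℂ))).re| ≤ ‖cp‖ * ‖cm‖ := by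
    intro n
    refine le_trans (Complex.abs_re_le_norm _) ?_
    rw [norm_mul, norm_cexp_two_I_mul, hwnorm, mul_one]
  have hSnorm : S = ‖cp‖^2 + ‖cm‖^2 := by
    rw [hSdef, Complex.normSq_eq_norm_sq, Complex.normSq_eq_norm_sq]
  have hVub2 : ∀ n : ℕ, 1 ≤ n → ‖v n‖^2 ≤ (‖cp‖+‖cm‖)^2 * (n:ℝ)^(-(α/2)) := by
    intro n hn
    have hnr : (0:ℝ) < (n:ℝ) := by exact_mod_cast hn
    have hrp : (0:ℝ) ≤ (n:ℝ)^(-(α/2)) := Real.rpow_nonneg hnr.le _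
    rw [hVnorm n hn, hSnorm]
    nlinarith [mul_le_mul_of_nonneg_right
      (le_trans (le_abs_self _) (hwre n)) hrp, sq_nonneg (‖cp‖ - ‖cm‖)]
  clear_value K β S w v A Efn γ D ε₂ B
  -- limits
  have hNβ : Tendsto (fun N : ℕ => (N:ℝ)^β) atTop atTop :=
    (tendsto_rpow_atTop hβ).comp tendsto_natCast_atTop_atTop
  have hquot : Tendsto (fun N : ℕ => (1/K + D*(N:ℝ)^γ) / (N:ℝ)^β) atTop (nhds 0) := by
    have t1 : Tendsto (fun N : ℕ => (N:ℝ)^(-β)) atTop (nhds 0) :=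
      (tendsto_rpow_neg_atTop hβ).comp tendsto_natCast_atTop_atTop
    have t2 : Tendsto (fun N : ℕ => (N:ℝ)^(-(β-γ))) atTop (nhds 0) :=
      (tendsto_rpow_neg_atTop hγβ).comp tendsto_natCast_atTop_atTop
    have t3 : Tendsto (fun N : ℕ => (1/K)*(N:ℝ)^(-β) + D*(N:ℝ)^(-(β-γ))) atTop (nhds 0) := by
      have h := (t1.const_mul (1/K)).add (t2.const_mul D)
      have h00 : (1/K)*(0:ℝ) + D*0 = 0 := by ring
      rw [h00] at h
      exact h
    refine Tendsto.congr' ?_ t3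
    filter_upwards [eventually_ge_atTop 1] with N hge
    have hnr : (0:ℝ) < (N:ℝ) := by exact_mod_cast hge
    rw [Real.rpow_neg hnr.le β, show -(β-γ) = γ - β by ring, Real.rpow_sub hnr]
    ring
  -- eventual conditions
  have hev : ∀ᶠ N : ℕ in atTop, (2:ℝ) ≤ (N:ℝ)^β
      ∧ 2*‖w‖*(1/K + D*(N:ℝ)^γ) ≤ (S/(4*β)) * (N:ℝ)^β
      ∧ B ≤ (S/(32*β)) * (N:ℝ)^β := by
    have e1 := hNβ.eventually_ge_atTop 2
    have e3 := hNβ.eventually_ge_atTop ((32*β/S)*B)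
    have hεc : (0:ℝ) < (S/(4*β))/(2*‖w‖+1) := by
      apply div_pos (div_pos hS (by linarith)) (by positivity)
    have e2 := hquot.eventually (gt_mem_nhds hεc)
    filter_upwards [e1, e3, e2, eventually_ge_atTop 1] with N h1 h3 h2 hge1
    have hnr : (0:ℝ) < (N:ℝ) := by exact_mod_cast hge1
    have hNβpos : (0:ℝ) < (N:ℝ)^β := Real.rpow_pos_of_pos hnr β
    refine ⟨h1, ?_, ?_⟩
    · have hlt := (div_lt_iff₀ hNβpos).mp h2
      have hw0 : (0:ℝ) ≤ ‖w‖ := norm_nonneg w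
      have key : 2*‖w‖*((S/(4*β))/(2*‖w‖+1)) ≤ S/(4*β) := by
        have hc0 : (0:ℝ) ≤ S/(4*β) := le_of_lt (div_pos hS (by linarith))
        rw [mul_comm, div_mul_eq_mul_div, div_le_iff₀ (by positivity : (0:ℝ) < 2*‖w‖+1)]
        nlinarith
      nlinarith [mul_le_mul_of_nonneg_left hlt.le (by positivity : (0:ℝ) ≤ 2*‖w‖),
        mul_le_mul_of_nonneg_right key hNβpos.le]
    · have hmul := mul_le_mul_of_nonneg_left h3
        (le_of_lt (div_pos hS (by linarith : (0:ℝ) < 32*β)))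
      have hBeq : (S/(32*β))*((32*β/S)*B) = B := by
        field_simp
      linarith [hBeq ▸ hmul]
  obtain ⟨N₂, hN₂⟩ := eventually_atTop.mp hev
  -- conclusion
  have hC₁pos : (0:ℝ) < S/(32*β) := div_pos hS (by linarith)
  have hC₂pos : (0:ℝ) < (2*(‖cp‖+‖cm‖)^2 + S/8)/β + 2*B + 1 := by
    have : (0:ℝ) ≤ (2*(‖cp‖+‖cm‖)^2 + S/8)/β := div_nonneg (by positivity) hβ.le
    linarith
  refine ⟨S/(32*β), (2*(‖cp‖+‖cm‖)^2 + S/8)/β + 2*B + 1, hC₁pos, hC₂pos, max N₂ 1, ?_⟩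
  intro N hN
  have hNN₂ : N₂ ≤ N := le_trans (le_max_left _ _) hN
  have hN1 : 1 ≤ N := le_trans (le_max_right _ _) hN
  obtain ⟨hc1, hc2, hc3⟩ := hN₂ N hNN₂
  have hnr : (0:ℝ) < (N:ℝ) := by exact_mod_cast hN1
  have hNβpos : (0:ℝ) < (N:ℝ)^β := Real.rpow_pos_of_pos hnr β
  have hA1 : (N:ℝ)^β/(2*β) ≤ A N := by
    have h' : (N:ℝ)^β/(2*β) ≤ ((N:ℝ)^β - 1)/β := by
      rw [div_le_div_iff₀ (by linarith) hβ]
      nlinarith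
    linarith [hAlb N]
  have hA2 : A N ≤ (N:ℝ)^β/β := hAub N
  have hE1 : 2*‖w‖*‖Efn N‖ ≤ (S/(4*β)) * (N:ℝ)^β := by
    have hEb := hEbound N
    have hw0 : (0:ℝ) ≤ ‖w‖ := norm_nonneg w
    nlinarith [mul_le_mul_of_nonneg_left hEb (by positivity : (0:ℝ) ≤ 2*‖w‖)]
  have hVlow : (S/(4*β)) * (N:ℝ)^β ≤ ∑ n ∈ Finset.Icc 1 N, ‖v n‖^2 := by
    rw [hVsum N]
    have hre : -(‖w‖*‖Efn N‖) ≤ (w * Efn N).re := by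
      have ha : |(w * Efn N).re| ≤ ‖w * Efn N‖ := Complex.abs_re_le_norm _
      rw [norm_mul] at ha
      have := neg_abs_le ((w * Efn N).re)
      linarith
    have hSA : S * ((N:ℝ)^β/(2*β)) ≤ S * A N := mul_le_mul_of_nonneg_left hA1 hS.le
    have heq : S * ((N:ℝ)^β/(2*β)) - (S/(4*β))*(N:ℝ)^β = (S/(4*β))*(N:ℝ)^β := by ring
    linarith [hre, hE1, hSA, heq]
  constructor
  · -- lower bound
    have hpt : ∀ n ∈ Finset.Icc 1 N, ‖v n‖^2/2 - ‖u n - v n‖^2 ≤ ‖u n‖^2 := by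
      intro n _
      have h1 : ‖v n‖ ≤ ‖u n‖ + ‖u n - v n‖ := by
        have h2 := norm_sub_le (u n) (u n - v n)
        rw [sub_sub_cancel] at h2
        exact h2
      nlinarith [sq_nonneg (‖u n‖ - ‖u n - v n‖),
        mul_nonneg (sub_nonneg.mpr h1) (add_nonneg (add_nonneg (norm_nonneg (u n))
          (norm_nonneg (u n - v n))) (norm_nonneg (v n)))]
    have hsum := Finset.sum_le_sum hpt
    rw [Finset.sum_sub_distrib, ← Finset.sum_div] at hsum
    have hd := hdiff N
    have hA2' : (S/16) * A N ≤ (S/16) * ((N:ℝ)^β/β) :=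
      mul_le_mul_of_nonneg_left hA2 (by positivity)
    have e1 : (S/(4*β))*(N:ℝ)^β/2 = (S/(8*β))*(N:ℝ)^β := by ring
    have e2 : (S/16)*((N:ℝ)^β/β) = (S/(16*β))*(N:ℝ)^β := by ring
    have e3 : (S/(8*β))*(N:ℝ)^β - (S/(16*β))*(N:ℝ)^β - (S/(32*β))*(N:ℝ)^β
        = (S/(32*β))*(N:ℝ)^β := by ring
    linarith [hVlow, hsum, hd, hA2', hc3, e1, e2, e3]
  · -- upper bound
    have hpt : ∀ n ∈ Finset.Icc 1 N, ‖u n‖^2 ≤ 2*‖v n‖^2 + 2*‖u n - v n‖^2 := by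
      intro n _
      have h1 : ‖u n‖ ≤ ‖v n‖ + ‖u n - v n‖ := by
        calc ‖u n‖ = ‖v n + (u n - v n)‖ := by congr 1; ring
          _ ≤ _ := norm_add_le _ _
      nlinarith [sq_nonneg (‖v n‖ - ‖u n - v n‖),
        mul_nonneg (sub_nonneg.mpr h1) (add_nonneg (add_nonneg (norm_nonneg (v n))
          (norm_nonneg (u n - v n))) (norm_nonneg (u n)))]
    have hsum := Finset.sum_le_sum hpt
    rw [Finset.sum_add_distrib, ← Finset.mul_sum, ← Finset.mul_sum] at hsum
    have hV : ∑ n ∈ Finset.Icc 1 N, ‖v n‖^2 ≤ (‖cp‖+‖cm‖)^2 * A N := by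
      rw [hAdef, Finset.mul_sum]
      exact Finset.sum_le_sum fun n hn => hVub2 n (Finset.mem_Icc.mp hn).1
    have hd := hdiff N
    have h1β : (1:ℝ) ≤ (N:ℝ)^β := by linarith
    have m1 : (‖cp‖+‖cm‖)^2 * A N ≤ (‖cp‖+‖cm‖)^2 * ((N:ℝ)^β/β) :=
      mul_le_mul_of_nonneg_left hA2 (by positivity)
    have m2 : (S/16) * A N ≤ (S/16) * ((N:ℝ)^β/β) :=
      mul_le_mul_of_nonneg_left hA2 (by positivity)
    have m3 : B ≤ B * (N:ℝ)^β := by nlinarith [h1β, hB0]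
    have erhs : ((2*(‖cp‖+‖cm‖)^2 + S/8)/β + 2*B + 1) * (N:ℝ)^β
        = 2*((‖cp‖+‖cm‖)^2 * ((N:ℝ)^β/β)) + 2*((S/16) * ((N:ℝ)^β/β))
          + 2*(B*(N:ℝ)^β) + (N:ℝ)^β := by ring
    linarith [hsum, hV, hd, m1, m2, m3, erhs, hNβpos.le]
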